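/- Fix an integer n ≥ 1 and define the delete-and-repair map ψ from permutations of {1,…,n+1} to permutations of {1,…,n} by: ψ(σ')(i) = σ'(n+1) if σ'(i) = n+1, and ψ(σ')(i) = σ'(i) otherwise (this is a well-defined permutation of {1,…,n}). Then for every real number α and every permutation σ of {1,…,n}, the sum of α^{#σ'} over all permutations σ' of {1,…,n+1} with ψ(σ') = σ equals (α + n)·α^{#σ}, where # denotes the number of cycles. (This is the consistency of the Ewens(α) distributions Q_n(σ;α) = α^{#σ}/α^{↑n} on permutations under delete-and-repair.) -/

import Mathlib

/-- The number of cycles of a permutation, fixed points counting as cycles of length 1. -/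
def cycleCount {n : ℕ} (σ : Equiv.Perm (Fin n)) : ℕ :=
  σ.cycleType.card + (Finset.univ.filter fun i => σ i = i).card

open Equiv Equiv.Perm Finset

/-- Auxiliary: `Fin n` is equivalent to the subtype of `Fin (n+1)` avoiding `last n`. -/
def lastEquiv (n : ℕ) : Fin n ≃ {i : Fin (n + 1) // i ≠ Fin.last n} where
  toFun j := ⟨j.castSucc, (Fin.castSucc_lt_last j).ne⟩
  invFun i := i.1.castPred i.2
  left_inv j := by simp
  right_inv i := by simp

/-- Multiplying by a transposition that joins a fixed point `a` to a non-fixed point `b`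
preserves the number of nontrivial cycles. -/
lemma cycleType_card_swap_mul {m : ℕ} (τ : Equiv.Perm (Fin m)) {a b : Fin m}
    (ha : τ a = a) (hab : a ≠ b) (hb : τ b ≠ b) :
    Multiset.card (Equiv.swap a b * τ).cycleType = Multiset.card τ.cycleType := by
  classical
  set g := τ.cycleOf b with hgdef
  have hgmem : g ∈ τ.cycleFactorsFinset := cycleOf_mem_cycleFactorsFinset_iff.2 (mem_support.2 hb)
  have hgc : g.IsCycle := isCycle_cycleOf τ hb
  have hga : g a = a := by
    rw [hgdef, cycleOf_apply]; split_ifs <;> simp [ha]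
  set h := τ * g⁻¹ with hhdef
  have hdisj : Disjoint h g := disjoint_mul_inv_of_mem_cycleFactorsFinset hgmem
  have hτ : h * g = τ := inv_mul_cancel_right τ g
  have hha : h a = a := by
    have h1 : g⁻¹ a = a := by rw [Equiv.Perm.inv_eq_iff_eq]; exact hga.symm
    rw [hhdef, mul_apply, h1, ha]
  have hhb : h b = b := by
    have h1 : g (τ⁻¹ b) = b := by
      have hsc : τ.SameCycle b (τ⁻¹ b) := ⟨-1, by simp⟩
      rw [hgdef, hsc.cycleOf_apply, ← mul_apply, mul_inv_cancel, one_apply]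
    have h2 : g⁻¹ b = τ⁻¹ b := by rw [Equiv.Perm.inv_eq_iff_eq]; exact h1.symm
    rw [hhdef, mul_apply, h2, ← mul_apply, mul_inv_cancel, one_apply]
  have hfixpow : ∀ k : ℕ, (g ^ k) a = a := fun k =>
    notMem_support.1 fun hmem => (notMem_support.2 hga) (support_pow_le g k hmem)
  set c := Equiv.swap a b * g with hcdef
  have hca : c a = b := by rw [hcdef, mul_apply, hga, swap_apply_left]
  have hgb : g b = τ b := cycleOf_apply_self τ b
  have hgbb : g b ≠ b := by rw [hgb]; exact hb
  have hcx : ∀ x : Fin m, x ≠ a → g x = x → c x = x := by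
    intro x hxa hxg
    have hxb : x ≠ b := by rintro rfl; exact hgbb hxg
    rw [hcdef, mul_apply, hxg, swap_apply_of_ne_of_ne hxa hxb]
  have hkey : ∀ k : ℕ, ∃ p : ℕ, (c ^ p) a = (g ^ k) b := by
    intro k
    induction k with
    | zero => exact ⟨1, by simpa using hca⟩
    | succ k ih =>
      rcases ih with ⟨p, hp⟩
      by_cases hk : (g ^ (k + 1)) b = b
      · exact ⟨1, by simp [hca, hk]⟩
      · refine ⟨p + 1, ?_⟩
        have hne_a : (g ^ (k + 1)) b ≠ a := by
          intro hEq
          exact hab ((g ^ (k + 1)).injective ((hfixpow (k + 1)).trans hEq.symm))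
        have hstep : g ((g ^ k) b) = (g ^ (k + 1)) b := by
          rw [pow_succ' g, mul_apply]
        rw [pow_succ' c, mul_apply, hp, hcdef, mul_apply, hstep,
          swap_apply_of_ne_of_ne hne_a hk]
  have hcc : c.IsCycle := by
    refine ⟨a, by rw [hca]; exact hab.symm, ?_⟩
    intro y hy
    rcases eq_or_ne y a with rfl | hya
    · exact Equiv.Perm.SameCycle.refl _ _
    · have hgy : g y ≠ y := fun hgy => hy (hcx y hya hgy)
      obtain ⟨k, hk⟩ := hgc.exists_pow_eq hgbb hgy
      obtain ⟨p, hp⟩ := hkey k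
      exact ⟨(p : ℤ), by rw [zpow_natCast, hp, hk]⟩
  have hdisj2 : Disjoint c h := by
    intro x
    by_cases hx : h x = x
    · exact Or.inr hx
    · left
      have hgx : g x = x := (hdisj x).resolve_left hx
      have hxa : x ≠ a := by rintro rfl; exact hx hha
      exact hcx x hxa hgx
  have e1 : Equiv.swap a b * τ = c * h := by
    rw [← hτ, hdisj.commute.eq, hcdef, mul_assoc]
  rw [e1, hdisj2.cycleType_mul, ← hτ, hdisj.cycleType_mul, hcc.cycleType, hgc.cycleType]
  simp [Multiset.card_add]

/-- Multiplying by a transposition joining a fixed point `a` with any other point `b`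
decreases the cycle count (fixed points included) by exactly one. -/
lemma cycleCount_swap_mul {m : ℕ} (τ : Equiv.Perm (Fin m)) {a b : Fin m}
    (ha : τ a = a) (hab : a ≠ b) :
    cycleCount τ = cycleCount (Equiv.swap a b * τ) + 1 := by
  classical
  have hfixiff : ∀ x : Fin m, (Equiv.swap a b * τ) x = x ↔ τ x = x ∧ x ≠ a ∧ x ≠ b := by
    intro x
    constructor
    · intro hx
      rcases eq_or_ne x a with rfl | hxa
      · rw [mul_apply, ha, swap_apply_left] at hx
        exact absurd hx hab.symm
      rcases eq_or_ne x b with hxb | hxb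
      · subst hxb
        exfalso
        rcases eq_or_ne (τ x) x with h3 | h3
        · rw [mul_apply, h3, swap_apply_right] at hx; exact hab hx
        rcases eq_or_ne (τ x) a with h4 | h4
        · exact hab (τ.injective (ha.trans h4.symm))
        · rw [mul_apply, swap_apply_of_ne_of_ne h4 h3] at hx; exact h3 hx
      · have h1 : τ x ≠ a := fun h => hxa (τ.injective (h.trans ha.symm))
        have h2 : τ x ≠ b := by
          intro h
          rw [mul_apply, h, swap_apply_right] at hx
          exact hxa hx.symm
        rw [mul_apply, swap_apply_of_ne_of_ne h1 h2] at hx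
        exact ⟨hx, hxa, hxb⟩
    · rintro ⟨h1, h2, h3⟩
      rw [mul_apply, h1, swap_apply_of_ne_of_ne h2 h3]
  have hamem : a ∈ Finset.univ.filter fun x => τ x = x := by simp [ha]
  by_cases hb : τ b = b
  · -- `b` is also fixed : the transposition becomes a new cycle
    have hdisj : Disjoint (Equiv.swap a b) τ := by
      intro x
      by_cases hx : τ x = x
      · exact Or.inr hx
      · left
        have hxa : x ≠ a := by rintro rfl; exact hx ha
        have hxb : x ≠ b := by rintro rfl; exact hx hb
        exact swap_apply_of_ne_of_ne hxa hxb
    have hct : Multiset.card (Equiv.swap a b * τ).cycleType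
        = Multiset.card τ.cycleType + 1 := by
      rw [hdisj.cycleType_mul, (isCycle_swap hab).cycleType]
      simp [Multiset.card_add]
    have hbmem : b ∈ (Finset.univ.filter fun x => τ x = x).erase a :=
      Finset.mem_erase.2 ⟨hab.symm, by simp [hb]⟩
    have hfs : (Finset.univ.filter fun x => (Equiv.swap a b * τ) x = x)
        = ((Finset.univ.filter fun x => τ x = x).erase a).erase b := by
      ext x
      simp only [Finset.mem_filter, Finset.mem_univ, true_and, Finset.mem_erase, hfixiff x]
      tauto
    have e2 := Finset.card_erase_add_one hbmem
    have e3 := Finset.card_erase_add_one hamem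
    unfold cycleCount
    rw [hct, hfs]
    omega
  · -- `b` is not fixed : `a` joins the cycle of `b`
    have hct := cycleType_card_swap_mul τ ha hab hb
    have hfs : (Finset.univ.filter fun x => (Equiv.swap a b * τ) x = x)
        = (Finset.univ.filter fun x => τ x = x).erase a := by
      ext x
      simp only [Finset.mem_filter, Finset.mem_univ, true_and, Finset.mem_erase, hfixiff x]
      constructor
      · tauto
      · rintro ⟨h1, h2⟩
        exact ⟨h2, h1, fun h => hb (h ▸ h2)⟩
    have e3 := Finset.card_erase_add_one hamem
    unfold cycleCount
    rw [hct, hfs]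
    omega

/-- Consistency of the Ewens(α) distributions on permutations under delete-and-repair:
for the map `ψ` sending a permutation `σ'` of `{0,…,n}` to the permutation of `{0,…,n−1}`
with `ψ(σ')(i) = σ'(n)` if `σ'(i) = n` and `ψ(σ')(i) = σ'(i)` otherwise, the sum of
`α^{#σ'}` over all `σ'` with `ψ(σ') = σ` equals `(α + n)·α^{#σ}`. -/
theorem ewens_permutation_consistency (n : ℕ) (hn : 1 ≤ n) (α : ℝ)
    (σ : Equiv.Perm (Fin n)) :
    ∑ σ' ∈ (Finset.univ : Finset (Equiv.Perm (Fin (n + 1)))).filter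
        (fun σ' => ∀ i : Fin n, Fin.castSucc (σ i) =
          if σ' (Fin.castSucc i) = Fin.last n then σ' (Fin.last n)
          else σ' (Fin.castSucc i)),
      α ^ cycleCount σ' =
    (α + n) * α ^ cycleCount σ := by
  classical
  set E : Equiv.Perm (Fin (n + 1)) := σ.extendDomain (lastEquiv n) with hE
  have hEc : ∀ j : Fin n, E (Fin.castSucc j) = Fin.castSucc (σ j) := fun j =>
    σ.extendDomain_apply_image (lastEquiv n) j
  have hEl : E (Fin.last n) = Fin.last n :=
    σ.extendDomain_apply_not_subtype (lastEquiv n) (fun h => h rfl)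
  -- The fiber of the delete-and-repair map over σ
  have hset : ((Finset.univ : Finset (Equiv.Perm (Fin (n + 1)))).filter
        (fun σ' => ∀ i : Fin n, Fin.castSucc (σ i) =
          if σ' (Fin.castSucc i) = Fin.last n then σ' (Fin.last n)
          else σ' (Fin.castSucc i)))
      = Finset.univ.image fun x : Fin (n + 1) => Equiv.swap (Fin.last n) x * E := by
    ext σ'
    simp only [Finset.mem_filter, Finset.mem_univ, true_and, Finset.mem_image]
    constructor
    · intro hσ'
      refine ⟨σ' (Fin.last n), ?_⟩
      ext i
      rcases Fin.eq_castSucc_or_eq_last i with ⟨j, rfl⟩ | rfl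
      · rw [mul_apply, hEc]
        have h := hσ' j
        by_cases hc : σ' (Fin.castSucc j) = Fin.last n
        · rw [if_pos hc] at h
          rw [← h, swap_apply_right, hc]
        · rw [if_neg hc] at h
          rw [h]
          rw [swap_apply_of_ne_of_ne hc (fun h' => (Fin.castSucc_lt_last j).ne
            (σ'.injective h'))]
      · rw [mul_apply, hEl, swap_apply_left]
    · rintro ⟨x, rfl⟩ i
      rw [mul_apply, mul_apply, hEc, hEl, swap_apply_left]
      by_cases hx : Fin.castSucc (σ i) = x
      · have h1 : Equiv.swap (Fin.last n) x (Fin.castSucc (σ i)) = Fin.last n := by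
          rw [hx, swap_apply_right]
        rw [h1, if_pos rfl, hx]
      · have h1 : Fin.castSucc (σ i) ≠ Fin.last n := (Fin.castSucc_lt_last _).ne
        have h2 : Equiv.swap (Fin.last n) x (Fin.castSucc (σ i)) = Fin.castSucc (σ i) :=
          swap_apply_of_ne_of_ne h1 hx
        rw [h2, if_neg h1]
  -- cycle count of the extension
  have hct : E.cycleType = σ.cycleType := Equiv.Perm.cycleType_extendDomain _
  have hcfix : (Finset.univ.filter fun i => E i = i).card
      = (Finset.univ.filter fun i => σ i = i).card + 1 := by
    have hseteq : (Finset.univ.filter fun i : Fin (n + 1) => E i = i)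
        = insert (Fin.last n) ((Finset.univ.filter fun i => σ i = i).image Fin.castSucc) := by
      ext i
      simp only [Finset.mem_filter, Finset.mem_univ, true_and, Finset.mem_insert,
        Finset.mem_image]
      constructor
      · intro h
        rcases Fin.eq_castSucc_or_eq_last i with ⟨j, rfl⟩ | rfl
        · right; exact ⟨j, Fin.castSucc_injective n (by rw [← hEc j, h]), rfl⟩
        · left; rfl
      · rintro (rfl | ⟨j, hj, rfl⟩)
        · exact hEl
        · rw [hEc, hj]
    have hnm : Fin.last n ∉ (Finset.univ.filter fun i => σ i = i).image Fin.castSucc := by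
      intro hmem
      rcases Finset.mem_image.1 hmem with ⟨j, _, hj⟩
      exact (Fin.castSucc_lt_last j).ne hj
    rw [hseteq, Finset.card_insert_of_notMem hnm,
      Finset.card_image_of_injective _ (Fin.castSucc_injective n)]
  have hE_count : cycleCount E = cycleCount σ + 1 := by
    unfold cycleCount
    rw [hct, hcfix]
    omega
  have hElast : Equiv.swap (Fin.last n) (Fin.last n) * E = E := by
    ext i; simp [Equiv.swap_self]
  have hinj : ∀ x ∈ (Finset.univ : Finset (Fin (n + 1))),
      ∀ y ∈ (Finset.univ : Finset (Fin (n + 1))),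
      Equiv.swap (Fin.last n) x * E = Equiv.swap (Fin.last n) y * E → x = y := by
    intro x _ y _ hxy
    have h1 := congrArg (fun π : Equiv.Perm (Fin (n + 1)) => π (Fin.last n)) hxy
    simpa [mul_apply, hEl] using h1
  rw [hset, Finset.sum_image hinj, Fin.sum_univ_castSucc]
  have hterm : ∀ j : Fin n,
      α ^ cycleCount (Equiv.swap (Fin.last n) (Fin.castSucc j) * E) = α ^ cycleCount σ := by
    intro j
    have h1 := cycleCount_swap_mul E hEl (Fin.castSucc_lt_last j).ne'
    have h2 : cycleCount (Equiv.swap (Fin.last n) (Fin.castSucc j) * E) = cycleCount σ := by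
      omega
    rw [h2]
  rw [Finset.sum_congr rfl fun j _ => hterm j, hElast, hE_count]
  simp only [Finset.sum_const, Finset.card_univ, Fintype.card_fin, nsmul_eq_mul]
  rw [pow_succ]
  ring
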